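/- arXiv:2002.11505 — 3 statements merged into one kernel-verified Lean document; each statement's English description precedes it below -/
import Mathlib

section
/- For every q ≥ 2 and infinitely many n, there exists a rooted tree with Θ(n) vertices and height O(√n), together with an adversarial execution of a q-relaxed scheduler on the single-source propagation process, in which the frontier size never exceeds 4 and the process performs at least Ω(q·n) total updates. -/
open Finset

structure BPTree (V : Type*) [Fintype V] [DecidableEq V] where
  root : V
  parent : V → V
  parent_root : parent root = root
  reaches : ∀ v, ∃ k, parent^[k] v = root

namespace BPTree

variable {V : Type*} [Fintype V] [DecidableEq V]

/-- The set of children of a vertex; a non-root vertex `v` represents the tree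
edge `(parent v, v)` directed away from the root. -/
def children (T : BPTree V) (v : V) : Finset V :=
  univ.filter fun u => u ≠ T.root ∧ T.parent u = v

/-- Initially the active (nonzero-residual) edges are the edges out of the root. -/
def init (T : BPTree V) : Finset V :=
  T.children T.root

/-- Updating edge `v`: if it is active, it is deactivated and the edges to the
children of `v` become active (a useful update); otherwise nothing happens. -/
def step (T : BPTree V) (A : Finset V) (v : V) : Finset V :=
  if v ∈ A then A.erase v ∪ T.children v else A

/-- The frontier (set of active edges) after performing the updates in `L`. -/
def run (T : BPTree V) (L : List V) : Finset V :=
  L.foldl T.step T.init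

/-- The subsequence of useful updates of an execution, starting from frontier `A`. -/
def usefulList (T : BPTree V) : Finset V → List V → List V
  | _, [] => []
  | A, v :: L => (if v ∈ A then [v] else []) ++ usefulList T (T.step A v) L

/-- Distance from a vertex to the root; the level of the corresponding edge. -/
def depth (T : BPTree V) (v : V) : ℕ :=
  Nat.find (T.reaches v)

/-- Priority key (smaller = higher priority): active edges ordered by level,
inactive edges last. -/
def key (T : BPTree V) (H : ℕ) (A : Finset V) (v : V) : ℕ :=
  if v ∈ A then T.depth v else H + 1

end BPTree

/-- Priority key (smaller = higher priority) for an arbitrary priority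
assignment `prio` on edges: active edges ordered by `prio`, inactive last. -/
def keyP {V : Type*} [Fintype V] [DecidableEq V] (T : BPTree V)
    (prio : V → ℕ) (A : Finset V) (v : V) : ℕ :=
  if v ∈ A then prio v else (∑ w, prio w) + 1

namespace Stmt5Aux

open Finset

/-- Embedding of `ℕ` into `Fin (m*m+m+1)`, clamping at the top. -/
def cV (m x : ℕ) : Fin (m*m+m+1) := ⟨min x (m*m+m), by omega⟩

lemma cV_val_of_le {m x : ℕ} (hx : x ≤ m*m+m) : ((cV m x) : ℕ) = x := by
  simp [cV, Nat.min_eq_left hx]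

lemma cV_inj {m x y : ℕ} (hx : x ≤ m*m+m) (hy : y ≤ m*m+m) :
    cV m x = cV m y ↔ x = y := by
  constructor
  · intro h
    have := congrArg Fin.val h
    rwa [cV_val_of_le hx, cV_val_of_le hy] at this
  · rintro rfl; rfl

lemma eq_cV_iff {m a : ℕ} (ha : a ≤ m*m+m) (u : Fin (m*m+m+1)) :
    u = cV m a ↔ (u : ℕ) = a := by
  rw [Fin.ext_iff, cV_val_of_le ha]

/-- The parent function on indices: `0` is the root; `1..m` is the main path;
`j*m+i` (for `1 ≤ i,j ≤ m`) is the `j`-th vertex of the side path hanging off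
main vertex `i`. -/
def paN (m v : ℕ) : ℕ := if v = 0 then 0 else if v ≤ m then v - 1 else v - m

lemma paN_le (m v : ℕ) : paN m v ≤ v := by unfold paN; split_ifs <;> omega

def paF (m : ℕ) : Fin (m*m+m+1) → Fin (m*m+m+1) := fun v => cV m (paN m (v : ℕ))

lemma paF_val {m : ℕ} (v : Fin (m*m+m+1)) : ((paF m v : Fin (m*m+m+1)) : ℕ) = paN m (v : ℕ) := by
  have hv : (v : ℕ) ≤ m*m+m := by have := v.isLt; omega
  exact cV_val_of_le (le_trans (paN_le _ _) hv)

lemma paN_lt {m v : ℕ} (h0 : v ≠ 0) (hv : v ≤ m*m+m) : paN m v < v := by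
  unfold paN
  rcases Nat.eq_zero_or_pos m with hm | hm
  · subst hm; simp at hv; omega
  · split_ifs <;> omega

lemma paF_reaches_aux (m : ℕ) :
    ∀ K (v : Fin (m*m+m+1)), (v : ℕ) ≤ K → ∃ k, (paF m)^[k] v = cV m 0 := by
  intro K
  induction K with
  | zero =>
    intro v hv
    refine ⟨0, ?_⟩
    simp only [Function.iterate_zero, id_eq]
    rw [eq_cV_iff (by omega)]
    omega
  | succ K ih =>
    intro v hv
    by_cases h0 : (v : ℕ) = 0
    · refine ⟨0, ?_⟩
      simp only [Function.iterate_zero, id_eq]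
      rw [eq_cV_iff (by omega)]
      exact h0
    · have hvn : (v : ℕ) ≤ m*m+m := by have := v.isLt; omega
      have hlt : ((paF m v : Fin (m*m+m+1)) : ℕ) < (v : ℕ) := by
        rw [paF_val]; exact paN_lt h0 hvn
      obtain ⟨k, hk⟩ := ih (paF m v) (by omega)
      exact ⟨k+1, by rw [Function.iterate_succ_apply]; exact hk⟩

/-- The comb tree. -/
def T (m : ℕ) : BPTree (Fin (m*m+m+1)) where
  root := cV m 0
  parent := paF m
  parent_root := by
    show cV m (paN m ((cV m 0 : Fin (m*m+m+1)) : ℕ)) = cV m 0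
    rw [cV_val_of_le (by omega)]
    simp [paN]
  reaches := by
    intro v
    exact paF_reaches_aux m ((v : ℕ)) v le_rfl

end Stmt5Aux

namespace Stmt5Aux

open Finset

lemma mem_children_iff (m : ℕ) (x : ℕ) (hx : x ≤ m*m+m) (u : Fin (m*m+m+1)) :
    u ∈ (T m).children (cV m x) ↔ (u : ℕ) ≠ 0 ∧ paN m (u : ℕ) = x := by
  have hu : (u : ℕ) ≤ m*m+m := by have := u.isLt; omega
  simp only [BPTree.children, Finset.mem_filter, Finset.mem_univ, true_and]
  show (u ≠ cV m 0 ∧ paF m u = cV m x) ↔ _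
  rw [Ne, eq_cV_iff (by omega)]
  constructor
  · rintro ⟨h1, h2⟩
    refine ⟨h1, ?_⟩
    have := congrArg Fin.val h2
    rwa [paF_val, cV_val_of_le hx] at this
  · rintro ⟨h1, h2⟩
    refine ⟨h1, ?_⟩
    show cV m (paN m (u : ℕ)) = cV m x
    rw [h2]

lemma children_eq (m : ℕ) (hm : 1 ≤ m) (x : ℕ) (hx : x ≤ m*m+m) :
    (T m).children (cV m x) =
      if x = 0 then {cV m 1}
      else if x < m then {cV m (x+1), cV m (x+m)}
      else if x = m then {cV m (2*m)}
      else if x ≤ m*m then {cV m (x+m)}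
      else (∅ : Finset (Fin (m*m+m+1))) := by
  have hmm : m ≤ m*m := Nat.le_mul_of_pos_left m hm
  ext u
  rw [mem_children_iff m x hx u]
  have hu : (u : ℕ) ≤ m*m+m := by have := u.isLt; omega
  split_ifs with h1 h2 h3 h4
  · rw [Finset.mem_singleton, eq_cV_iff (by omega)]
    unfold paN; split_ifs <;> omega
  · rw [Finset.mem_insert, Finset.mem_singleton, eq_cV_iff (by omega),
      eq_cV_iff (by omega)]
    unfold paN; split_ifs <;> omega
  · rw [Finset.mem_singleton, eq_cV_iff (by omega)]
    unfold paN; split_ifs <;> omega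
  · rw [Finset.mem_singleton, eq_cV_iff (by omega)]
    unfold paN; split_ifs <;> omega
  · simp only [Finset.notMem_empty, iff_false, not_and]
    intro h5
    unfold paN; split_ifs <;> omega

end Stmt5Aux

namespace Stmt5Aux

open Finset

/-- The element updated at useful step `s` of the canonical execution. -/
def fL (m s : ℕ) : ℕ :=
  if s % (m+1) = 0 then s/(m+1)+1 else (s % (m+1))*m + s/(m+1)+1

/-- The frontier after `s` useful steps of the canonical execution. -/
def G (m s : ℕ) : Finset (Fin (m*m+m+1)) :=
  if s % (m+1) = 0 then (if s/(m+1) < m then {cV m (s/(m+1)+1)} else ∅)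
  else (if s/(m+1)+1 < m then {cV m (s/(m+1)+2)} else ∅) ∪
    {cV m ((s % (m+1))*m + s/(m+1)+1)}

lemma card_G_le (m s : ℕ) : (G m s).card ≤ 2 := by
  unfold G
  by_cases h1 : s % (m+1) = 0
  · rw [if_pos h1]; split_ifs <;> simp
  · rw [if_neg h1]
    refine le_trans (Finset.card_union_le _ _) ?_
    have h2 : ((if s/(m+1)+1 < m then {cV m (s/(m+1)+2)} else ∅) : Finset (Fin (m*m+m+1))).card ≤ 1 := by
      split_ifs <;> simp
    have h3 : ({cV m ((s % (m+1))*m + s/(m+1)+1)} : Finset (Fin (m*m+m+1))).card ≤ 1 := by simp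
    omega

lemma zero_ne_cV {m z : ℕ} (hm : 1 ≤ m) (hz : 1 ≤ z) : cV m 0 ≠ cV m z := by
  intro h
  have := congrArg Fin.val h
  simp only [cV] at this
  omega

lemma root_not_mem_G {m : ℕ} (hm : 1 ≤ m) (s : ℕ) : cV m 0 ∉ G m s := by
  intro hmem
  unfold G at hmem
  by_cases h1 : s % (m+1) = 0
  · rw [if_pos h1] at hmem
    split_ifs at hmem
    · rw [Finset.mem_singleton] at hmem
      exact absurd hmem (zero_ne_cV hm (Nat.succ_le_succ (Nat.zero_le _)))
    · exact Finset.notMem_empty _ hmem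
  · rw [if_neg h1] at hmem
    rcases Finset.mem_union.mp hmem with h | h
    · split_ifs at h
      · rw [Finset.mem_singleton] at h
        exact absurd h (zero_ne_cV hm (Nat.succ_le_succ (Nat.zero_le _)))
      · exact Finset.notMem_empty _ h
    · rw [Finset.mem_singleton] at h
      have hj : 1 ≤ s % (m+1) := by omega
      exact absurd h (zero_ne_cV hm (Nat.succ_le_succ (Nat.zero_le _)))

lemma fL_le {m : ℕ} (hm : 1 ≤ m) {s : ℕ} (hs : s < m*(m+1)) : fL m s ≤ m*m+m := by
  have hi0 : s/(m+1) < m := (Nat.div_lt_iff_lt_mul (by omega)).mpr hs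
  have hj : s % (m+1) < m+1 := Nat.mod_lt _ (by omega)
  have hjm : (s % (m+1)) * m ≤ m*m := Nat.mul_le_mul_right m (by omega)
  unfold fL
  split_ifs <;> omega

lemma G_mem {m : ℕ} (hm : 1 ≤ m) {s : ℕ} (hs : s < m*(m+1)) :
    cV m (fL m s) ∈ G m s := by
  have hi0 : s/(m+1) < m := (Nat.div_lt_iff_lt_mul (by omega)).mpr hs
  unfold fL G
  by_cases h1 : s % (m+1) = 0
  · rw [if_pos h1, if_pos h1, if_pos hi0]
    exact Finset.mem_singleton_self _
  · rw [if_neg h1, if_neg h1]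
    exact Finset.mem_union_right _ (Finset.mem_singleton_self _)

end Stmt5Aux

namespace Stmt5Aux

open Finset

lemma divmod_decomp (k s : ℕ) (hk : 1 ≤ k) :
    ∃ a r, s/k = a ∧ s % k = r ∧ s = k*a + r ∧ r < k :=
  ⟨s/k, s % k, rfl, rfl, (Nat.div_add_mod s k).symm, Nat.mod_lt _ (by omega)⟩

lemma G_step {m : ℕ} (hm : 1 ≤ m) {s : ℕ} (hs : s < m*(m+1)) :
    (T m).step (G m s) (cV m (fL m s)) = G m (s+1) := by
  obtain ⟨i0, j, hdiv, hmod, hsum, hj⟩ := divmod_decomp (m+1) s (by omega)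
  have hi0 : i0 < m := by
    rw [← hdiv]; exact (Nat.div_lt_iff_lt_mul (by omega)).mpr hs
  have hmm : m ≤ m*m := Nat.le_mul_of_pos_left m hm
  rw [BPTree.step, if_pos (G_mem hm hs)]
  by_cases hj0 : j = 0
  · -- popping main vertex i0+1
    subst hj0
    have hdiv1 : (s+1)/(m+1) = i0 := by
      rw [show s+1 = (m+1)*i0 + 1 by omega, Nat.mul_add_div (by omega),
        Nat.div_eq_of_lt (by omega)]
      omega
    have hmod1 : (s+1) % (m+1) = 1 := by
      rw [show s+1 = (m+1)*i0 + 1 by omega, Nat.mul_add_mod,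
        Nat.mod_eq_of_lt (by omega)]
    rw [G, G, fL, hdiv, hmod, hdiv1, hmod1,
      if_pos (show (0:ℕ) = 0 from rfl), if_pos (show (0:ℕ) = 0 from rfl),
      if_pos hi0, if_neg (show ¬(1:ℕ) = 0 by omega)]
    rw [Finset.erase_singleton, Finset.empty_union,
      children_eq m hm (i0+1) (by omega),
      if_neg (show ¬ i0+1 = 0 by omega)]
    by_cases h2 : i0+1 < m
    · rw [if_pos h2, if_pos h2, show (1:ℕ)*m + i0 + 1 = i0+1+m by ring,
        ← Finset.insert_eq]
    · have h3 : i0 + 1 = m := by omega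
      rw [if_neg h2, if_pos h3, if_neg h2, Finset.empty_union,
        show (1:ℕ)*m + i0 + 1 = 2*m by omega]
  · -- popping side vertex j*m + i0 + 1
    have hjm : j * m ≤ m * m := Nat.mul_le_mul_right m (by omega)
    have hjm1 : m ≤ j * m := Nat.le_mul_of_pos_left m (by omega)
    have hx : j*m + i0 + 1 ≤ m*m+m := by omega
    rw [G, fL, hdiv, hmod, if_neg hj0, if_neg hj0]
    have hne : cV m (j*m + i0+1) ∉
        (if i0+1 < m then {cV m (i0+2)} else (∅ : Finset (Fin (m*m+m+1)))) := by
      split_ifs with h2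
      · rw [Finset.mem_singleton, cV_inj hx (by omega)]
        omega
      · exact Finset.notMem_empty _
    rw [Finset.erase_union_distrib, Finset.erase_singleton,
      Finset.erase_eq_of_notMem hne, Finset.union_empty,
      children_eq m hm (j*m+i0+1) hx,
      if_neg (show ¬ j*m+i0+1 = 0 by omega),
      if_neg (show ¬ j*m+i0+1 < m by omega),
      if_neg (show ¬ j*m+i0+1 = m by omega)]
    by_cases h4 : j < m
    · -- next side vertex exists
      have hdiv1 : (s+1)/(m+1) = i0 := by
        rw [show s+1 = (m+1)*i0 + (j+1) by omega, Nat.mul_add_div (by omega),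
          Nat.div_eq_of_lt (by omega)]
        omega
      have hmod1 : (s+1) % (m+1) = j+1 := by
        rw [show s+1 = (m+1)*i0 + (j+1) by omega, Nat.mul_add_mod,
          Nat.mod_eq_of_lt (by omega)]
      have hj1m : (j+1)*m ≤ m*m := Nat.mul_le_mul_right m (by omega)
      rw [if_pos (show j*m+i0+1 ≤ m*m by
          have hsm : (j+1)*m = j*m+m := by ring
          omega),
        G, hdiv1, hmod1, if_neg (show ¬ j+1 = 0 by omega),
        show j*m+i0+1+m = (j+1)*m + i0 + 1 by ring]
    · -- last side vertex: no children
      have h5 : j = m := by omega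
      have hdiv1 : (s+1)/(m+1) = i0+1 := by
        rw [show s+1 = (m+1)*(i0+1) from by
            have : (m+1)*(i0+1) = (m+1)*i0 + (m+1) := by ring
            omega,
          Nat.mul_div_cancel_left _ (show 0 < m+1 by omega)]
      have hmod1 : (s+1) % (m+1) = 0 := by
        rw [show s+1 = (m+1)*(i0+1) from by
            have : (m+1)*(i0+1) = (m+1)*i0 + (m+1) := by ring
            omega,
          Nat.mul_mod_right]
      have hgt : ¬ j*m+i0+1 ≤ m*m := by rw [h5]; omega
      rw [if_neg hgt, Finset.union_empty, G, hdiv1, hmod1]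
      split_ifs <;> first | rfl | omega

end Stmt5Aux

namespace Stmt5Aux

open Finset

/-- The adversarial schedule: `d-1` wasted updates (of the root, a no-op)
followed by one useful update, repeated for each of the `m*(m+1)` edges. -/
def LL (m d : ℕ) : List (Fin (m*m+m+1)) :=
  (List.range (m*(m+1)*d)).map
    (fun t => if t % d = d - 1 then cV m (fL m (t/d)) else cV m 0)

lemma LL_length (m d : ℕ) : (LL m d).length = m*(m+1)*d := by
  simp [LL]

lemma LL_get (m d : ℕ) {t : ℕ} (ht : t < m*(m+1)*d) :
    (LL m d)[t]'(by rw [LL_length]; exact ht) =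
      if t % d = d - 1 then cV m (fL m (t/d)) else cV m 0 := by
  simp [LL]

lemma run_take {m d : ℕ} (hm : 1 ≤ m) (hd : 1 ≤ d) :
    ∀ t, t ≤ m*(m+1)*d → (T m).run ((LL m d).take t) = G m (t/d) := by
  intro t
  induction t with
  | zero =>
    intro _
    rw [List.take_zero, BPTree.run, List.foldl_nil, Nat.zero_div, BPTree.init]
    show (T m).children (cV m 0) = _
    rw [children_eq m hm 0 (by omega), if_pos rfl, G]
    norm_num
    omega
  | succ t ih =>
    intro ht
    have ht' : t < m*(m+1)*d := by omega
    have htake : (LL m d).take (t+1) =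
        (LL m d).take t ++ [(LL m d)[t]'(by rw [LL_length]; exact ht')] := by
      rw [List.take_succ, List.getElem?_eq_getElem (by rw [LL_length]; exact ht')]
      rfl
    rw [BPTree.run, htake, List.foldl_append]
    have hrun : List.foldl (T m).step (T m).init ((LL m d).take t) = G m (t/d) :=
      ih (by omega)
    rw [hrun, LL_get m d ht']
    obtain ⟨a, r, hdiv, hmod, hsum, hr⟩ := divmod_decomp d t (by omega)
    by_cases hu : t % d = d - 1
    · -- useful step
      have hs : t/d < m*(m+1) := (Nat.div_lt_iff_lt_mul (by omega)).mpr ht'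
      rw [if_pos hu, List.foldl_cons, List.foldl_nil, G_step hm hs]
      have : (t+1)/d = t/d + 1 := by
        rw [hdiv, show t+1 = d*(a+1) from by
            have : d*(a+1) = d*a + d := by ring
            omega,
          Nat.mul_div_cancel_left _ (show 0 < d by omega)]
      rw [this]
    · -- wasted step: updating the (inactive) root does nothing
      rw [if_neg hu, List.foldl_cons, List.foldl_nil, BPTree.step,
        if_neg (show cV m 0 ∉ G m (t/d) from root_not_mem_G hm _)]
      have : (t+1)/d = t/d := by
        rw [hdiv, show t+1 = d*a + (r+1) by omega,
          Nat.mul_add_div (by omega), Nat.div_eq_of_lt (by omega)]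
        omega
      rw [this]

lemma run_all {m d : ℕ} (hm : 1 ≤ m) (hd : 1 ≤ d) :
    (T m).run (LL m d) = ∅ := by
  have h1 : (LL m d) = (LL m d).take (m*(m+1)*d) := by
    rw [List.take_of_length_le (by rw [LL_length])]
  rw [h1, run_take hm hd _ le_rfl,
    Nat.mul_div_cancel _ (show 0 < d by omega), G,
    Nat.mul_mod_left, if_pos rfl,
    Nat.mul_div_cancel _ (show 0 < m+1 by omega), if_neg (lt_irrefl m)]

end Stmt5Aux

namespace Stmt5Aux

open Finset

lemma iter_main {m : ℕ} : ∀ i, i ≤ m → (paF m)^[i] (cV m i) = cV m 0 := by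
  intro i
  induction i with
  | zero => intro _; rfl
  | succ i ih =>
    intro hi
    have hmm : m ≤ m*m := Nat.le_mul_of_pos_left m (by omega)
    have h1 : paF m (cV m (i+1)) = cV m i := by
      unfold paF
      rw [cV_val_of_le (show i+1 ≤ m*m+m by omega)]
      have hp : paN m (i+1) = i := by
        rw [paN, if_neg (Nat.succ_ne_zero i), if_pos (show i+1 ≤ m by omega)]
        omega
      rw [hp]
    rw [Function.iterate_succ_apply, h1]
    exact ih (by omega)

lemma iter_side {m : ℕ} (hm : 1 ≤ m) :
    ∀ j i, 1 ≤ i → i ≤ m → j ≤ m → (paF m)^[j] (cV m (j*m+i)) = cV m i := by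
  intro j
  induction j with
  | zero => intro i _ _ _; rw [Nat.zero_mul, Nat.zero_add]; rfl
  | succ j ih =>
    intro i h1 h2 h3
    have hj1m : (j+1)*m ≤ m*m := Nat.mul_le_mul_right m h3
    have hsm : (j+1)*m = j*m + m := by ring
    have h4 : paF m (cV m ((j+1)*m+i)) = cV m (j*m+i) := by
      unfold paF
      rw [cV_val_of_le (show (j+1)*m+i ≤ m*m+m by omega)]
      have hp : paN m ((j+1)*m+i) = j*m+i := by
        rw [paN, if_neg (show ¬ (j+1)*m+i = 0 by omega),
          if_neg (show ¬ (j+1)*m+i ≤ m by omega)]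
        omega
      rw [hp]
    rw [Function.iterate_succ_apply, h4]
    exact ih i h1 h2 (by omega)

lemma depth_le {m : ℕ} (hm : 1 ≤ m) (v : Fin (m*m+m+1)) :
    (T m).depth v ≤ 2*m := by
  have hv : (v : ℕ) ≤ m*m+m := by have := v.isLt; omega
  have hveq : v = cV m (v : ℕ) := by rw [eq_cV_iff hv]
  by_cases h1 : (v : ℕ) ≤ m
  · -- main path vertex (or root)
    have h := iter_main ((v : ℕ)) h1
    rw [← hveq] at h
    exact le_trans (Nat.find_min' _ h) (by omega)
  · -- side vertex: (v : ℕ) = j*m + i with 1 ≤ i,j ≤ m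
    obtain ⟨j, r, hdiv, hmod, hsum, hr⟩ := divmod_decomp m ((v : ℕ) - 1) hm
    set i := r + 1 with hi
    have hcm : m*j = j*m := by ring
    have hji : (v : ℕ) = j*m + i := by omega
    have hj1 : 1 ≤ j := by
      rw [← hdiv, Nat.le_div_iff_mul_le (show 0 < m by omega)]
      omega
    have hjm : j ≤ m := by
      have h := (Nat.div_lt_iff_lt_mul (show 0 < m by omega)).mpr
        (show (v : ℕ) - 1 < (m+1)*m from by
          have : (m+1)*m = m*m+m := by ring
          omega)
      rw [hdiv] at h
      omega
    have him : i ≤ m := by omega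
    have hstep : (paF m)^[i + j] v = cV m 0 := by
      have h := iter_side hm j i (by omega) him hjm
      rw [← hji, ← hveq] at h
      rw [Function.iterate_add_apply, h]
      exact iter_main i him
    exact le_trans (Nat.find_min' _ hstep) (by omega)

end Stmt5Aux

namespace Stmt5Aux

open Finset

lemma useful_at {m d : ℕ} (hm : 1 ≤ m) (hd : 1 ≤ d) {t : ℕ}
    (ht : t < m*(m+1)*d) (hu : t % d = d-1) :
    ((LL m d)[t]'(by rw [LL_length]; exact ht)) ∈ (T m).run ((LL m d).take t) := by
  rw [LL_get m d ht, if_pos hu, run_take hm hd t (le_of_lt ht)]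
  exact G_mem hm ((Nat.div_lt_iff_lt_mul (by omega)).mpr ht)

end Stmt5Aux


open Stmt5Aux

open Classical in
/-- for every `q ≥ 2` and infinitely many `n` there is a rooted
tree with `Θ(n)` vertices (here exactly `n + 1`) and height `O(√n)`, edge
priorities, and an adversarial execution that is legitimate for a `q`-relaxed
scheduler (rank bound `hrank` and the `q`-fairness consequence that every `q`
consecutive updates contain a useful one), converges, keeps the frontier of
size at most `4` throughout, and performs `Ω(q · n)` updates in total. -/
theorem stmt5 :
    ∃ c : ℕ, 0 < c ∧ ∀ q : ℕ, 2 ≤ q → ∀ N : ℕ, ∃ n, N ≤ n ∧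
      ∃ (T : BPTree (Fin (n + 1))) (prio : Fin (n + 1) → ℕ) (L : List (Fin (n + 1))),
        T.run L = ∅ ∧
        (∀ v, T.depth v ≤ c * (Nat.sqrt n + 1)) ∧
        (∀ t, (T.run (L.take t)).card ≤ 4) ∧
        (∀ t : Fin L.length,
          (Finset.univ.filter fun u => u ≠ T.root ∧
              keyP T prio (T.run (L.take (t : ℕ))) u
                < keyP T prio (T.run (L.take (t : ℕ))) (L.get t)).card < q) ∧
        (∀ t, t + q ≤ L.length →
          ∃ s, t ≤ s ∧ s < t + q ∧ ∃ v, L[s]? = some v ∧ v ∈ T.run (L.take s)) ∧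
        q * n ≤ c * L.length := by
  classical
  refine ⟨2, by norm_num, ?_⟩
  intro q hq N
  set m := max 1 N with hmdef
  have hm : 1 ≤ m := le_max_left _ _
  set d := q - 1 with hddef
  have hd : 1 ≤ d := by omega
  refine ⟨m*m+m, le_trans (le_max_right 1 N) (by omega),
    T m, (fun _ => 0), LL m d, run_all hm hd, ?_, ?_, ?_, ?_, ?_⟩
  · -- depth bound
    intro v
    have h1 := depth_le hm v
    have hsq : m ≤ Nat.sqrt (m*m+m) := by
      calc m = Nat.sqrt (m*m) := (Nat.sqrt_eq m).symm
      _ ≤ Nat.sqrt (m*m+m) := Nat.sqrt_le_sqrt (by omega)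
    omega
  · -- frontier size bound
    intro t
    by_cases ht : t ≤ m*(m+1)*d
    · rw [run_take hm hd t ht]
      exact le_trans (card_G_le m _) (by norm_num)
    · rw [List.take_of_length_le (by rw [LL_length]; omega), run_all hm hd]
      simp
  · -- rank bound
    intro t
    have ht : (t : ℕ) < m*(m+1)*d :=
      lt_of_lt_of_le t.isLt (le_of_eq (LL_length m d))
    have hA : (T m).run ((LL m d).take (t : ℕ)) = G m ((t : ℕ)/d) :=
      run_take hm hd _ (le_of_lt ht)
    by_cases hu : (t : ℕ) % d = d - 1
    · -- useful update: nothing has smaller key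
      have hmem : (LL m d).get t ∈ (T m).run ((LL m d).take (t : ℕ)) := by
        rw [List.get_eq_getElem]
        exact useful_at hm hd ht hu
      have hkey : keyP (T m) (fun _ => 0) ((T m).run ((LL m d).take (t : ℕ)))
          ((LL m d).get t) = 0 := by
        rw [keyP, if_pos hmem]
      have hempty : (Finset.univ.filter fun u => u ≠ (T m).root ∧
          keyP (T m) (fun _ => 0) ((T m).run ((LL m d).take (t : ℕ))) u
            < keyP (T m) (fun _ => 0) ((T m).run ((LL m d).take (t : ℕ)))
              ((LL m d).get t)) = ∅ := by
        refine Finset.filter_eq_empty_iff.mpr ?_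
        intro u _
        rw [hkey]
        rintro ⟨-, hlt⟩
        exact Nat.not_lt_zero _ hlt
      rw [hempty]
      simp
      omega
    · -- wasted update: fewer than q active edges
      have hd2 : 2 ≤ d := by
        by_contra hcon
        have h2 : (t : ℕ) % d < d := Nat.mod_lt _ (by omega)
        exact hu (by omega)
      have hroot : (LL m d).get t = (T m).root := by
        rw [List.get_eq_getElem, LL_get m d ht, if_neg hu]
        rfl
      have hkey : keyP (T m) (fun _ => 0) ((T m).run ((LL m d).take (t : ℕ)))
          ((LL m d).get t) = 1 := by
        rw [keyP, if_neg (by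
          rw [hroot, hA]
          exact root_not_mem_G hm _)]
        simp
      have hsub : (Finset.univ.filter fun u => u ≠ (T m).root ∧
          keyP (T m) (fun _ => 0) ((T m).run ((LL m d).take (t : ℕ))) u
            < keyP (T m) (fun _ => 0) ((T m).run ((LL m d).take (t : ℕ)))
              ((LL m d).get t)) ⊆ G m ((t : ℕ)/d) := by
        intro u hu'
        rw [Finset.mem_filter] at hu'
        obtain ⟨-, -, hlt⟩ := hu'
        rw [hkey, keyP] at hlt
        by_contra hnot
        rw [if_neg (by rw [hA]; exact hnot)] at hlt
        simp at hlt
      have := le_trans (Finset.card_le_card hsub) (card_G_le m _)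
      omega
  · -- q-fairness
    intro t ht
    rw [LL_length] at ht
    obtain ⟨a, r, hdiv, hmod, hsum, hr⟩ := divmod_decomp d t (by omega)
    refine ⟨d*a + (d-1), by omega, by omega, ?_⟩
    have hs : d*a + (d-1) < m*(m+1)*d := by omega
    have hsu : (d*a + (d-1)) % d = d - 1 := by
      rw [Nat.mul_add_mod, Nat.mod_eq_of_lt (by omega)]
    refine ⟨(LL m d)[d*a + (d-1)]'(by rw [LL_length]; exact hs), ?_, ?_⟩
    · exact List.getElem?_eq_getElem _
    · exact useful_at hm hd hs hsu
  · -- total number of updates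
    rw [LL_length]
    have h1 : q ≤ 2*d := by omega
    calc q * (m*m+m) ≤ (2*d) * (m*m+m) := Nat.mul_le_mul_right _ h1
    _ = 2 * (m*(m+1)*d) := by ring
end

section
/- Consider a set of tasks partitioned into buckets B_n, B_{n-1}, …, indexed by priority, where at most 2H buckets are nonempty, each task must be executed once with its assigned priority (a useful update), and a task's priority becomes active only after all its predecessors are done. Under a q-relaxed scheduler, the total number of updates (useful plus wasted) is at most N + 2H·q², where N is the total number of tasks. -/
open Classical in
/-- tasks partitioned into priority buckets (at most `2H` of them
nonempty), each of which must be executed once usefully, processed under a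
`q`-relaxed scheduler.  `R` is the full sequence of returned tasks; a task is
pending at time `t` if it does not occur in `R.take t` (its useful update has
not yet happened).  `hrank` states that whenever at least `q` pending tasks of
the current top bucket exist, the request returns one of them; `hfair` is
`q`-fairness: a pending top-bucket task exists among the next `q` returns.
Then the total number of updates is at most `N + 2H·q²`. -/
theorem stmt8 {τ : Type*} [Fintype τ] [DecidableEq τ] (q H : ℕ) (hq : 1 ≤ q)
    (bucket : τ → ℕ)
    (hbuckets : (Finset.univ.image bucket).card ≤ 2 * H)
    (R : List τ)
    (hall : ∀ v : τ, v ∈ R)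
    (hpending : ∀ t, t < R.length → ∃ v : τ, v ∉ R.take t)
    (hrank : ∀ t : Fin R.length,
      q ≤ (Finset.univ.filter fun v : τ => v ∉ R.take (t : ℕ) ∧
            ∀ u : τ, u ∉ R.take (t : ℕ) → bucket u ≤ bucket v).card →
      (R.get t ∉ R.take (t : ℕ) ∧
        ∀ u : τ, u ∉ R.take (t : ℕ) → bucket u ≤ bucket (R.get t)))
    (hfair : ∀ (t : ℕ) (v : τ), v ∉ R.take t →
      (∀ u : τ, u ∉ R.take t → bucket u ≤ bucket v) →
      t + q ≤ R.length →
      ∃ s, t ≤ s ∧ s < t + q ∧ ∃ w : τ, R[s]? = some w ∧ w ∉ R.take s ∧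
        ∀ u : τ, u ∉ R.take s → bucket u ≤ bucket w) :
    R.length ≤ Fintype.card τ + 2 * H * q ^ 2 := by
  classical
  -- membership in `take` is monotone
  have take_mono : ∀ {s t : ℕ} {v : τ}, s ≤ t → v ∈ R.take s → v ∈ R.take t := by
    intro s t v hst hv
    have h : R.take s = (R.take t).take s := by
      rw [List.take_take, Nat.min_eq_left hst]
    rw [h] at hv
    exact ((R.take t).take_prefix s).subset hv
  have mem_take_of : ∀ {i j : ℕ}, i < j → ∀ hi : i < R.length, R[i] ∈ R.take j := by
    intro i j hij hi
    have h1 : i < (R.take j).length := by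
      simp only [List.length_take]; omega
    have h2 : (R.take j)[i] = R[i] := List.getElem_take
    exact h2 ▸ (R.take j).getElem_mem h1
  -- pending set and top bucket
  set P : ℕ → Finset τ := fun t => Finset.univ.filter (fun v => v ∉ R.take t) with hPdef
  have hPmono : ∀ {s t : ℕ}, s ≤ t → P t ⊆ P s := by
    intro s t hst v hv
    simp only [hPdef, Finset.mem_filter, Finset.mem_univ, true_and] at hv ⊢
    exact fun h => hv (take_mono hst h)
  set tb : ℕ → ℕ := fun t => (P t).sup bucket with htbdef
  have htb_anti : ∀ {s t : ℕ}, s ≤ t → tb t ≤ tb s := fun hst => Finset.sup_mono (hPmono hst)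
  have htb_mem : ∀ t, t < R.length → ∃ v : τ, v ∉ R.take t ∧ bucket v = tb t := by
    intro t ht
    obtain ⟨v, hv⟩ := hpending t ht
    obtain ⟨u, hu, hu2⟩ := Finset.exists_mem_eq_sup (P t) ⟨v, by simp [hPdef, hv]⟩ bucket
    exact ⟨u, by simpa [hPdef] using hu, hu2.symm⟩
  have htb_le : ∀ {t : ℕ} {v : τ}, v ∉ R.take t → bucket v ≤ tb t := by
    intro t v hv
    exact Finset.le_sup (by simp [hPdef, hv])
  -- bucket-b pending set
  set T : ℕ → ℕ → Finset τ := fun b t => Finset.univ.filter (fun v => v ∉ R.take t ∧ bucket v = b)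
    with hTdef
  have hTmono : ∀ {b : ℕ} {s t : ℕ}, s ≤ t → T b t ⊆ T b s := by
    intro b s t hst v hv
    simp only [hTdef, Finset.mem_filter, Finset.mem_univ, true_and] at hv ⊢
    exact ⟨fun h => hv.1 (take_mono hst h), hv.2⟩
  -- useful and wasted steps
  set U : Finset (Fin R.length) :=
    Finset.univ.filter (fun t => R.get t ∉ R.take (t : ℕ)) with hUdef
  set W : Finset (Fin R.length) :=
    Finset.univ.filter (fun t => R.get t ∈ R.take (t : ℕ)) with hWdef
  have hsplit : U.card + W.card = R.length := by
    have h := Finset.card_filter_add_card_filter_not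
      (s := (Finset.univ : Finset (Fin R.length)))
      (p := fun t => R.get t ∉ R.take (t : ℕ))
    simpa [hUdef, hWdef, not_not, Finset.card_univ] using h
  -- useful steps are at most the number of tasks
  have hU : U.card ≤ Fintype.card τ := by
    have h := Finset.card_le_card_of_injOn (fun t : Fin R.length => R.get t)
      (fun t _ => Finset.mem_univ (R.get t)) (s := U) (t := (Finset.univ : Finset τ)) ?_
    · simpa using h
    · intro t1 h1 t2 h2 heq
      by_contra hne
      have hmem : ∀ {a b : Fin R.length}, a ∈ U → b ∈ U → a < b → R.get a = R.get b → False := by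
        intro a b ha hb hab he
        have hbU : R.get b ∉ R.take (b : ℕ) := (Finset.mem_filter.mp hb).2
        have : R.get a ∈ R.take (b : ℕ) := by
          have := mem_take_of (i := (a : ℕ)) (j := (b : ℕ)) hab a.isLt
          simpa [List.get_eq_getElem] using this
        exact hbU (he ▸ this)
      rcases lt_trichotomy t1 t2 with h | h | h
      · exact hmem h1 h2 h heq
      · exact hne h
      · exact hmem h2 h1 h heq.symm
  -- per-bucket bound on wasted steps
  have hWbound : ∀ b : ℕ, (W.filter (fun t : Fin R.length => tb ↑t = b)).card ≤ q ^ 2 := by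
    intro b
    set Wb := W.filter (fun t : Fin R.length => tb ↑t = b) with hWbdef
    rcases Wb.eq_empty_or_nonempty with he | hne
    · simp [he]
    set t0 : Fin R.length := Wb.min' hne with ht0def
    have ht0mem : t0 ∈ Wb := Wb.min'_mem hne
    have ht0w : R.get t0 ∈ R.take (t0 : ℕ) :=
      (Finset.mem_filter.mp ((Finset.mem_filter.mp ht0mem).1)).2
    have ht0b : tb (t0 : ℕ) = b := (Finset.mem_filter.mp ht0mem).2
    -- the top set coincides with T b t whenever tb t = b
    have hAT : ∀ t : ℕ, t < R.length → tb t = b →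
        (Finset.univ.filter fun v : τ => v ∉ R.take t ∧
          ∀ u : τ, u ∉ R.take t → bucket u ≤ bucket v) = T b t := by
      intro t ht htb
      ext v
      simp only [hTdef, Finset.mem_filter, Finset.mem_univ, true_and]
      constructor
      · rintro ⟨hv, htop⟩
        refine ⟨hv, le_antisymm (htb ▸ htb_le hv) ?_⟩
        obtain ⟨u, hu, hub⟩ := htb_mem t ht
        calc b = bucket u := by rw [hub, htb]
          _ ≤ bucket v := htop u hu
      · rintro ⟨hv, hvb⟩
        refine ⟨hv, fun u hu => ?_⟩
        rw [hvb, ← htb]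
        exact htb_le hu
    have hcq : (T b (t0 : ℕ)).card < q := by
      rw [← hAT (t0 : ℕ) t0.isLt ht0b]
      by_contra hge
      push_neg at hge
      exact (hrank t0 hge).1 ht0w
    set c := (T b (t0 : ℕ)).card with hcdef
    have key : ∀ t' ∈ Wb, (t' : ℕ) < (t0 : ℕ) + q ^ 2 := by
      intro t' ht'
      by_contra hcon
      push_neg at hcon
      have ht'b : tb (t' : ℕ) = b := (Finset.mem_filter.mp ht').2
      have ht'L : (t' : ℕ) < R.length := t'.isLt
      have hq2 : q * q = q ^ 2 := (pow_two q).symm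
      have hinterval : ∀ s : ℕ, (t0 : ℕ) ≤ s → s ≤ (t' : ℕ) → tb s = b := by
        intro s h1 h2
        refine le_antisymm ?_ ?_
        · rw [← ht0b]; exact htb_anti h1
        · rw [← ht'b]; exact htb_anti h2
      have ind : ∀ k, k ≤ c → (T b ((t0 : ℕ) + k * q)).card ≤ c - k := by
        intro k
        induction k with
        | zero => intro _; simp [hcdef]
        | succ k ih =>
          intro hk1
          have ihk := ih (Nat.le_of_succ_le hk1)
          set s := (t0 : ℕ) + k * q with hs
          have hmul : (k + 1) * q ≤ q * q := Nat.mul_le_mul_right q (by omega)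
          have hse : s + q = (t0 : ℕ) + (k + 1) * q := by rw [hs]; ring
          have hsq : s + q ≤ (t' : ℕ) := by
            have h2 : (t0 : ℕ) + (k + 1) * q ≤ (t0 : ℕ) + q * q := Nat.add_le_add_left hmul _
            omega
          rcases (T b s).eq_empty_or_nonempty with he2 | hne2
          · have hsub2 : T b ((t0 : ℕ) + (k + 1) * q) ⊆ T b s := hTmono (by omega)
            have := Finset.card_le_card hsub2
            rw [he2] at this
            simpa using le_trans this (Nat.zero_le _)
          · obtain ⟨v, hv⟩ := hne2
            have hvmem := Finset.mem_filter.mp hv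
            have htbs : tb s = b := hinterval s (by omega) (by omega)
            have hvtop : ∀ u : τ, u ∉ R.take s → bucket u ≤ bucket v := by
              intro u hu
              rw [hvmem.2.2, ← htbs]
              exact htb_le hu
            have hfl : s + q ≤ R.length := le_trans hsq (le_of_lt ht'L)
            obtain ⟨s', hs'1, hs'2, w, hw, hwpend, hwtop⟩ := hfair s v hvmem.2.1 hvtop hfl
            have hs'L : s' < R.length := lt_of_lt_of_le hs'2 hfl
            have htbs' : tb s' = b := hinterval s' (by omega) (by omega)
            have hwb : bucket w = b := by
              refine le_antisymm (by rw [← htbs']; exact htb_le hwpend) ?_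
              obtain ⟨u, hu, hub⟩ := htb_mem s' hs'L
              calc b = bucket u := by rw [hub, htbs']
                _ ≤ bucket w := hwtop u hu
            obtain ⟨hs'lt, hgw⟩ := List.getElem?_eq_some_iff.mp hw
            have hwin : w ∈ R.take (s' + 1) := hgw ▸ mem_take_of (Nat.lt_succ_self s') hs'lt
            have hwT : w ∈ T b s := by
              simp only [hTdef, Finset.mem_filter, Finset.mem_univ, true_and]
              exact ⟨fun hmem => hwpend (take_mono hs'1 hmem), hwb⟩
            have hsub3 : T b (s + q) ⊆ (T b s).erase w := by
              intro u hu
              simp only [hTdef, Finset.mem_filter, Finset.mem_univ, true_and] at hu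
              refine Finset.mem_erase.mpr ⟨?_, ?_⟩
              · rintro rfl
                exact hu.1 (take_mono (by omega) hwin)
              · simp only [hTdef, Finset.mem_filter, Finset.mem_univ, true_and]
                exact ⟨fun hmem => hu.1 (take_mono (by omega) hmem), hu.2⟩
            have hcard := Finset.card_le_card hsub3
            rw [Finset.card_erase_of_mem hwT] at hcard
            rw [← hse]
            omega
      have hfin := ind c le_rfl
      have hmul2 : c * q ≤ q * q := Nat.mul_le_mul_right q (le_of_lt hcq)
      have hsL : (t0 : ℕ) + c * q < R.length := by omega
      have htbb : tb ((t0 : ℕ) + c * q) = b := hinterval _ (by omega) (by omega)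
      obtain ⟨v, hv, hvb⟩ := htb_mem _ hsL
      have hvT : v ∈ T b ((t0 : ℕ) + c * q) := by
        simp only [hTdef, Finset.mem_filter, Finset.mem_univ, true_and]
        exact ⟨hv, by rw [hvb, htbb]⟩
      have h1 : 0 < (T b ((t0 : ℕ) + c * q)).card := Finset.card_pos.mpr ⟨v, hvT⟩
      omega
    calc Wb.card ≤ (Finset.Ico ((t0 : ℕ)) ((t0 : ℕ) + q ^ 2)).card := by
          refine Finset.card_le_card_of_injOn (fun t : Fin R.length => (t : ℕ)) ?_ ?_
          · intro t ht
            exact Finset.mem_Ico.mpr ⟨Wb.min'_le t ht, key t ht⟩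
          · intro a _ b' _ h
            exact Fin.val_injective h
      _ = q ^ 2 := by simp
  -- total wasted bound
  have hW : W.card ≤ 2 * H * q ^ 2 := by
    have hsub : W ⊆ (Finset.univ.image bucket).biUnion
        (fun b => W.filter (fun t : Fin R.length => tb ↑t = b)) := by
      intro t ht
      obtain ⟨v, hv, hvb⟩ := htb_mem (t : ℕ) t.isLt
      exact Finset.mem_biUnion.mpr ⟨bucket v,
        Finset.mem_image_of_mem bucket (Finset.mem_univ v),
        Finset.mem_filter.mpr ⟨ht, hvb.symm⟩⟩
    calc W.card ≤ ((Finset.univ.image bucket).biUnion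
          (fun b => W.filter (fun t : Fin R.length => tb ↑t = b))).card := Finset.card_le_card hsub
      _ ≤ ∑ b ∈ Finset.univ.image bucket, (W.filter (fun t : Fin R.length => tb ↑t = b)).card :=
          Finset.card_biUnion_le
      _ ≤ (Finset.univ.image bucket).card * q ^ 2 := by
          have := Finset.sum_le_card_nsmul (Finset.univ.image bucket)
            (fun b => (W.filter (fun t : Fin R.length => tb ↑t = b)).card) (q ^ 2)
            (fun b _ => hWbound b)
          simpa [smul_eq_mul] using this
      _ ≤ 2 * H * q ^ 2 := Nat.mul_le_mul_right _ hbuckets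
  omega
end

section
/- The relaxed version of the optimal tree schedule, executed with a q-relaxed scheduler, performs at most O(n + q²·H) total message updates before every message has received its useful update, where n is the number of vertices and H the height of the tree. -/
section Stmt10Aux

variable {M : Type*} [Fintype M] [DecidableEq M]

/-- Pending messages at time `t`. -/
def pendS (R : List M) (t : ℕ) : Finset M :=
  Finset.univ.filter fun v => v ∉ R.take t

/-- Maximum bucket among pending messages. -/
def mxB (bucket : M → ℕ) (R : List M) (t : ℕ) : ℕ :=
  (pendS R t).sup bucket

/-- Top pending messages at time `t`. -/
def topS (bucket : M → ℕ) (R : List M) (t : ℕ) : Finset M :=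
  Finset.univ.filter fun v : M => v ∉ R.take t ∧
    ∀ u : M, u ∉ R.take t → bucket u ≤ bucket v

lemma mem_pendS {R : List M} {t : ℕ} {v : M} : v ∈ pendS R t ↔ v ∉ R.take t := by
  simp [pendS]

lemma mem_topS {bucket : M → ℕ} {R : List M} {t : ℕ} {v : M} :
    v ∈ topS bucket R t ↔ v ∉ R.take t ∧ ∀ u : M, u ∉ R.take t → bucket u ≤ bucket v := by
  simp [topS]

lemma take_mono_mem {R : List M} {t t' : ℕ} {v : M} (h : t ≤ t')
    (hv : v ∈ R.take t) : v ∈ R.take t' := by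
  have he : R.take t = (R.take t').take t := by
    rw [List.take_take, Nat.min_eq_left h]
  rw [he] at hv
  exact List.take_subset _ _ hv

lemma mxB_anti {bucket : M → ℕ} {R : List M} {t t' : ℕ} (h : t ≤ t') :
    mxB bucket R t' ≤ mxB bucket R t := by
  apply Finset.sup_mono
  intro v hv
  rw [mem_pendS] at hv ⊢
  exact fun hc => hv (take_mono_mem h hc)

lemma le_mxB {bucket : M → ℕ} {R : List M} {t : ℕ} {v : M} (hv : v ∉ R.take t) :
    bucket v ≤ mxB bucket R t :=
  Finset.le_sup (mem_pendS.2 hv)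

lemma mxB_le {bucket : M → ℕ} {R : List M} {t : ℕ} {v : M} (hv : v ∈ topS bucket R t) :
    mxB bucket R t ≤ bucket v := by
  rw [mem_topS] at hv
  exact Finset.sup_le fun u hu => hv.2 u (mem_pendS.1 hu)

lemma topS_subset {bucket : M → ℕ} {R : List M} {t t' : ℕ} (h : t ≤ t')
    (hmxe : mxB bucket R t = mxB bucket R t') : topS bucket R t' ⊆ topS bucket R t := by
  intro v hv
  have h1 := (mem_topS.1 hv).1
  rw [mem_topS]
  refine ⟨fun hc => h1 (take_mono_mem h hc), fun u hu => ?_⟩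
  calc bucket u ≤ mxB bucket R t := le_mxB hu
    _ = mxB bucket R t' := hmxe
    _ ≤ bucket v := mxB_le hv

lemma getElem_mem_take {R : List M} {t t' : ℕ} (h : t < R.length) (htt : t < t') :
    R[t]'h ∈ R.take t' := by
  have h2 : t < (R.take t').length := by
    rw [List.length_take]; omega
  have he : (R.take t')[t]'h2 = R[t]'h := List.getElem_take (h := h2)
  rw [← he]
  exact List.getElem_mem h2

end Stmt10Aux


open Classical in
/-- the relaxed version of the optimal tree schedule.  The
`2(n-1)` directed messages of a tree with `n` vertices are partitioned into at
most `2H` priority buckets (`H` the height); a message is pending at time `t`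
if its useful update has not yet occurred in the execution `R`, and by the
schedule's structure, under a `q`-relaxed scheduler, whenever at least `q`
pending messages of the current top bucket exist the request returns one of
them (`hrank`), and a pending top-bucket message is returned within `q`
requests (`hfair`, `q`-fairness).  Then the total number of message updates
performed before every message has received its useful update is
`O(n + q²·H)` — concretely at most `4 * (n + q² * H)`. -/
theorem stmt10 {M : Type*} [Fintype M] [DecidableEq M] (q H n : ℕ) (hq : 1 ≤ q)
    (hM : Fintype.card M = 2 * (n - 1))
    (bucket : M → ℕ)
    (hbuckets : (Finset.univ.image bucket).card ≤ 2 * H)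
    (R : List M)
    (hall : ∀ v : M, v ∈ R)
    (hpending : ∀ t, t < R.length → ∃ v : M, v ∉ R.take t)
    (hrank : ∀ t : Fin R.length,
      q ≤ (Finset.univ.filter fun v : M => v ∉ R.take (t : ℕ) ∧
            ∀ u : M, u ∉ R.take (t : ℕ) → bucket u ≤ bucket v).card →
      (R.get t ∉ R.take (t : ℕ) ∧
        ∀ u : M, u ∉ R.take (t : ℕ) → bucket u ≤ bucket (R.get t)))
    (hfair : ∀ (t : ℕ) (v : M), v ∉ R.take t →
      (∀ u : M, u ∉ R.take t → bucket u ≤ bucket v) →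
      t + q ≤ R.length →
      ∃ s, t ≤ s ∧ s < t + q ∧ ∃ w : M, R[s]? = some w ∧ w ∉ R.take s ∧
        ∀ u : M, u ∉ R.take s → bucket u ≤ bucket w) :
    R.length ≤ 4 * (n + q ^ 2 * H) := by
  classical
  -- dispose of the empty case
  rcases isEmpty_or_nonempty M with hMe | hMne
  · have h0 : R.length = 0 := by
      by_contra h
      obtain ⟨v, -⟩ := hpending 0 (Nat.pos_of_ne_zero h)
      exact hMe.false v
    simp [h0]
  have hH1 : 1 ≤ H := by
    have h1 : (Finset.univ.image bucket).Nonempty :=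
      ⟨bucket (Classical.arbitrary M), Finset.mem_image_of_mem _ (Finset.mem_univ _)⟩
    have h2 := Finset.card_pos.mpr h1
    omega
  -- wasted steps have small top set
  have hwaste : ∀ (t : ℕ) (h : t < R.length), R[t]'h ∈ R.take t →
      (topS bucket R t).card < q := by
    intro t h hw
    by_contra hc
    push_neg at hc
    have hEq : topS bucket R t =
        (Finset.univ.filter fun v : M => v ∉ R.take t ∧
          ∀ u : M, u ∉ R.take t → bucket u ≤ bucket v) := by
      ext v
      simp [topS]
    rw [hEq] at hc
    have h1 := (hrank ⟨t, h⟩ hc).1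
    simp only [List.get_eq_getElem] at h1
    exact h1 hw
  -- the useful steps
  set U := (Finset.range R.length).filter
      (fun t => ∃ h : t < R.length, R[t]'h ∉ R.take t) with hU
  -- small useful-top steps
  set S := (Finset.range R.length).filter
      (fun s => (∃ h : s < R.length, R[s]'h ∉ R.take s ∧
        ∀ u : M, u ∉ R.take s → bucket u ≤ bucket (R[s]'h)) ∧
        (topS bucket R s).card < q) with hS
  -- wasted steps with room, and the tail
  set W1 := (Finset.range R.length).filter
      (fun t => ¬(∃ h : t < R.length, R[t]'h ∉ R.take t) ∧ t + q ≤ R.length) with hW1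
  set W2 := (Finset.range R.length).filter (fun t => ¬(t + q ≤ R.length)) with hW2
  -- counting useful steps
  have hUcard : U.card ≤ 2 * (n - 1) := by
    rw [← hM, ← Finset.card_univ]
    have key : ∀ {a b : ℕ}, a ∈ U → b ∈ U → a < b →
        R.getD a (Classical.arbitrary M) ≠ R.getD b (Classical.arbitrary M) := by
      intro a b ha hb hab hEq
      obtain ⟨har, hal, hau⟩ := Finset.mem_filter.1 ha
      obtain ⟨hbr, hbl, hbu⟩ := Finset.mem_filter.1 hb
      rw [List.getD_eq_getElem R _ hal, List.getD_eq_getElem R _ hbl] at hEq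
      have hmem : R[a]'hal ∈ R.take b := getElem_mem_take hal hab
      rw [hEq] at hmem
      exact hbu hmem
    apply Finset.card_le_card_of_injOn (fun t => R.getD t (Classical.arbitrary M))
      (fun _ _ => Finset.mem_univ _)
    intro a ha b hb hEq
    rcases lt_trichotomy a b with h | h | h
    · exact absurd hEq (key (Finset.mem_coe.1 ha) (Finset.mem_coe.1 hb) h)
    · exact h
    · exact absurd hEq.symm (key (Finset.mem_coe.1 hb) (Finset.mem_coe.1 ha) h)
  -- counting small useful-top steps
  have hScard : S.card ≤ (Finset.univ.image bucket).card * (q - 1) := by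
    have hmaps : ∀ s ∈ S, (mxB bucket R s, (topS bucket R s).card) ∈
        (Finset.univ.image bucket) ×ˢ Finset.Ico 1 q := by
      intro s hs
      obtain ⟨hsr, ⟨hlt, hpend, htop⟩, hcard⟩ := Finset.mem_filter.1 hs
      rw [Finset.mem_product]
      constructor
      · have hPne : (pendS R s).Nonempty := ⟨R[s]'hlt, mem_pendS.2 hpend⟩
        obtain ⟨b, hb1, hb2⟩ := Finset.exists_mem_eq_sup (pendS R s) hPne bucket
        have : mxB bucket R s = bucket b := hb2
        rw [this]
        exact Finset.mem_image_of_mem _ (Finset.mem_univ _)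
      · rw [Finset.mem_Ico]
        refine ⟨?_, hcard⟩
        have : R[s]'hlt ∈ topS bucket R s := mem_topS.2 ⟨hpend, htop⟩
        exact Finset.card_pos.2 ⟨_, this⟩
    have key : ∀ {a b : ℕ}, a ∈ S → b ∈ S → a < b →
        (mxB bucket R a, (topS bucket R a).card) ≠
        (mxB bucket R b, (topS bucket R b).card) := by
      intro a b ha hb hab hEq
      obtain ⟨har, ⟨hal, hau, hatop⟩, hac⟩ := Finset.mem_filter.1 ha
      obtain ⟨hbr, ⟨hbl, hbu, hbtop⟩, hbc⟩ := Finset.mem_filter.1 hb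
      simp only [Prod.mk.injEq] at hEq
      have hsub : topS bucket R b ⊆ topS bucket R a := topS_subset (le_of_lt hab) hEq.1
      have hmem : R[a]'hal ∈ topS bucket R a := mem_topS.2 ⟨hau, hatop⟩
      have hnmem : R[a]'hal ∉ topS bucket R b := by
        intro hcon
        exact (mem_topS.1 hcon).1 (getElem_mem_take hal hab)
      have hss : topS bucket R b ⊂ topS bucket R a :=
        (Finset.ssubset_iff_of_subset hsub).2 ⟨_, hmem, hnmem⟩
      have := Finset.card_lt_card hss
      omega
    have hinj : Set.InjOn (fun s => (mxB bucket R s, (topS bucket R s).card)) S := by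
      intro a ha b hb hEq
      rcases lt_trichotomy a b with h | h | h
      · exact absurd hEq (key (Finset.mem_coe.1 ha) (Finset.mem_coe.1 hb) h)
      · exact h
      · exact absurd hEq.symm (key (Finset.mem_coe.1 hb) (Finset.mem_coe.1 ha) h)
    calc S.card ≤ ((Finset.univ.image bucket) ×ˢ Finset.Ico 1 q).card :=
          Finset.card_le_card_of_injOn _ hmaps hinj
      _ = (Finset.univ.image bucket).card * (q - 1) := by
          rw [Finset.card_product, Nat.card_Ico]
  -- every wasted step with room maps into a small useful-top step nearby
  have hgS : ∀ t (ht : t < R.length), R[t]'ht ∈ R.take t → t + q ≤ R.length →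
      ∃ s, t < s ∧ s < t + q ∧ s ∈ S := by
    intro t ht hw htq
    have hPne : (pendS R t).Nonempty := by
      obtain ⟨v, hv⟩ := hpending t ht
      exact ⟨v, mem_pendS.2 hv⟩
    obtain ⟨v0, hv0P, hv0⟩ := Finset.exists_mem_eq_sup (pendS R t) hPne bucket
    have hv0' : mxB bucket R t = bucket v0 := hv0
    have hv0pend : v0 ∉ R.take t := mem_pendS.1 hv0P
    have hv0top : ∀ u : M, u ∉ R.take t → bucket u ≤ bucket v0 := by
      intro u hu
      rw [← hv0']
      exact le_mxB hu
    obtain ⟨s1, hts1, hs1q, w, hw1, hw2, hw3⟩ := hfair t v0 hv0pend hv0top htq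
    obtain ⟨hs1len, hws⟩ := List.getElem?_eq_some_iff.mp hw1
    have hts1' : t < s1 := by
      rcases Nat.lt_or_ge t s1 with h | h
      · exact h
      · exfalso
        have he : s1 = t := le_antisymm h hts1
        subst he
        rw [hws] at hw
        exact hw2 hw
    -- note s1 is a useful-top step; take the least one
    have hQne : ∃ s, t < s ∧ ∃ h : s < R.length, R[s]'h ∉ R.take s ∧
        ∀ u : M, u ∉ R.take s → bucket u ≤ bucket (R[s]'h) := by
      refine ⟨s1, hts1', hs1len, ?_, ?_⟩
      · rw [hws]; exact hw2
      · rw [hws]; exact hw3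
    have hQs1 : t < s1 ∧ ∃ h : s1 < R.length, R[s1]'h ∉ R.take s1 ∧
        ∀ u : M, u ∉ R.take s1 → bucket u ≤ bucket (R[s1]'h) :=
      ⟨hts1', hs1len, by rw [hws]; exact hw2, by rw [hws]; exact hw3⟩
    have hQne' : ∃ s, t < s ∧ ∃ h : s < R.length, R[s]'h ∉ R.take s ∧
        ∀ u : M, u ∉ R.take s → bucket u ≤ bucket (R[s]'h) := ⟨s1, hQs1⟩
    clear hQne
    set s0 := Nat.find hQne' with hs0def
    obtain ⟨hts0, hs0len, hs0pend, hs0top⟩ := Nat.find_spec hQne'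
    have hs0le : s0 ≤ s1 := Nat.find_min' hQne' hQs1
    -- the maximum bucket does not drop before s0
    have hmxeq : mxB bucket R s0 = mxB bucket R t := by
      refine le_antisymm (mxB_anti (le_of_lt hts0)) ?_
      by_contra hc
      push_neg at hc
      have hv0s0 : v0 ∈ R.take s0 := by
        by_contra hp
        have h1 : bucket v0 ≤ mxB bucket R s0 := le_mxB hp
        rw [← hv0'] at h1
        omega
      -- first occurrence index of v0
      have hjne : ∃ j, v0 ∈ R.take (j + 1) := by
        refine ⟨s0 - 1, ?_⟩
        have : s0 - 1 + 1 = s0 := by omega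
        rw [this]
        exact hv0s0
      set j := Nat.find hjne with hjdef
      have hjmem : v0 ∈ R.take (j + 1) := Nat.find_spec hjne
      have hjnot : v0 ∉ R.take j := by
        intro hcj
        have hj1 : j ≠ 0 := by
          intro h0
          rw [h0] at hcj
          simp at hcj
        have hmin := Nat.find_min hjne (show j - 1 < j by omega)
        apply hmin
        have he : j - 1 + 1 = j := by omega
        rw [he]
        exact hcj
      have hjlen : j < R.length := by
        by_contra hcl
        push_neg at hcl
        have he : R.take (j + 1) = R.take j := by
          rw [List.take_of_length_le (by omega), List.take_of_length_le hcl]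
        rw [he] at hjmem
        exact hjnot hjmem
      have hRj : R[j]'hjlen = v0 := by
        have hsucc : R.take (j + 1) = R.take j ++ R[j]?.toList := List.take_succ
        rw [hsucc] at hjmem
        rcases List.mem_append.mp hjmem with h | h
        · exact absurd h hjnot
        · rw [List.getElem?_eq_getElem hjlen] at h
          simp only [Option.toList_some, List.mem_singleton] at h
          exact h.symm
      have htj : t < j := by
        rcases Nat.lt_or_ge t j with h | h
        · exact h
        · exfalso
          rcases Nat.lt_or_ge j t with h2 | h2
          · exact hv0pend (take_mono_mem (by omega) hjmem)
          · have he : j = t := le_antisymm h h2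
            have hmem1 : v0 ∈ R.take (t + 1) := he ▸ hjmem
            rw [List.take_succ, List.getElem?_eq_getElem ht] at hmem1
            rcases List.mem_append.mp hmem1 with h3 | h3
            · exact hv0pend h3
            · simp only [Option.toList_some, List.mem_singleton] at h3
              rw [h3] at hv0pend
              exact hv0pend hw
      have hjs0 : j < s0 := by
        have hmem' : v0 ∈ R.take ((s0 - 1) + 1) := by
          rw [show s0 - 1 + 1 = s0 by omega]
          exact hv0s0
        have hj' : j ≤ s0 - 1 := Nat.find_min' hjne hmem'
        omega
      have hQj : t < j ∧ ∃ h : j < R.length, R[j]'h ∉ R.take j ∧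
          ∀ u : M, u ∉ R.take j → bucket u ≤ bucket (R[j]'h) := by
        refine ⟨htj, hjlen, by rw [hRj]; exact hjnot, ?_⟩
        intro u hu
        rw [hRj, ← hv0']
        calc bucket u ≤ mxB bucket R j := le_mxB hu
          _ ≤ mxB bucket R t := mxB_anti (le_of_lt htj)
      exact (Nat.find_min hQne' hjs0) hQj
    have hcardt : (topS bucket R t).card < q := hwaste t ht hw
    have hcards0 : (topS bucket R s0).card < q :=
      lt_of_le_of_lt
        (Finset.card_le_card (topS_subset (le_of_lt hts0) hmxeq.symm)) hcardt
    refine ⟨s0, hts0, by omega, ?_⟩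
    exact Finset.mem_filter.2 ⟨Finset.mem_range.2 hs0len, ⟨hs0len, hs0pend, hs0top⟩, hcards0⟩
  -- counting wasted steps with room
  have hgS' : ∀ t ∈ W1, ∃ s, s ∈ S ∧ t < s ∧ s < t + q := by
    intro t ht
    rw [hW1, Finset.mem_filter, Finset.mem_range] at ht
    obtain ⟨htlen, hnu, htq⟩ := ht
    have hw : R[t]'htlen ∈ R.take t := by
      by_contra hcc
      exact hnu ⟨htlen, hcc⟩
    obtain ⟨s, h1, h2, h3⟩ := hgS t htlen hw htq
    exact ⟨s, h3, h1, h2⟩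
  have hW1card : W1.card ≤ S.card * (q - 1) := by
    choose! f hf1 hf2 hf3 using hgS'
    have hmaps : ∀ t ∈ W1, (f t, f t - t - 1) ∈ S ×ˢ Finset.range (q - 1) := by
      intro t ht
      have h1 := hf1 t ht
      have h2 := hf2 t ht
      have h3 := hf3 t ht
      rw [Finset.mem_product]
      exact ⟨h1, by rw [Finset.mem_range]; omega⟩
    have hinj : Set.InjOn (fun t => (f t, f t - t - 1)) W1 := by
      intro a ha b hb hEq
      have h2a := hf2 a (Finset.mem_coe.1 ha)
      have h2b := hf2 b (Finset.mem_coe.1 hb)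
      simp only [Prod.mk.injEq] at hEq
      omega
    calc W1.card ≤ (S ×ˢ Finset.range (q - 1)).card :=
          Finset.card_le_card_of_injOn _ hmaps hinj
      _ = S.card * (q - 1) := by rw [Finset.card_product, Finset.card_range]
  -- counting the tail
  have hW2card : W2.card ≤ q - 1 := by
    have hsub : W2 ⊆ Finset.Ico (R.length - (q - 1)) R.length := by
      intro t ht
      rw [hW2, Finset.mem_filter, Finset.mem_range] at ht
      rw [Finset.mem_Ico]
      omega
    have h1 := Finset.card_le_card hsub
    rw [Nat.card_Ico] at h1
    omega
  -- the three families cover all steps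
  have hcover : Finset.range R.length ⊆ U ∪ W1 ∪ W2 := by
    intro t ht
    simp only [Finset.mem_union, hU, hW1, hW2, Finset.mem_filter]
    by_cases h1 : ∃ h : t < R.length, R[t]'h ∉ R.take t
    · exact Or.inl (Or.inl ⟨ht, h1⟩)
    · by_cases h2 : t + q ≤ R.length
      · exact Or.inl (Or.inr ⟨ht, h1, h2⟩)
      · exact Or.inr ⟨ht, h2⟩
  have hlen_le : R.length ≤ U.card + W1.card + W2.card := by
    calc R.length = (Finset.range R.length).card := (Finset.card_range _).symm
      _ ≤ (U ∪ W1 ∪ W2).card := Finset.card_le_card hcover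
      _ ≤ (U ∪ W1).card + W2.card := Finset.card_union_le _ _
      _ ≤ U.card + W1.card + W2.card := by
          have := Finset.card_union_le U W1
          omega
  -- final arithmetic
  have hq2 : q - 1 ≤ q := by omega
  have hSmall : S.card * (q - 1) ≤ 2 * H * (q * q) := by
    calc S.card * (q - 1) ≤ ((Finset.univ.image bucket).card * (q - 1)) * (q - 1) :=
          Nat.mul_le_mul_right _ hScard
      _ ≤ (2 * H * q) * q := Nat.mul_le_mul (Nat.mul_le_mul hbuckets hq2) hq2
      _ = 2 * H * (q * q) := by ring
  have hq1 : q - 1 ≤ q * q * H := by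
    have h1 : q ≤ q * q := Nat.le_mul_of_pos_left q hq
    have h2 : q * q ≤ q * q * H := Nat.le_mul_of_pos_right _ hH1
    omega
  have hK : R.length ≤ 2 * (n - 1) + 2 * H * (q * q) + (q - 1) := by
    have := hlen_le
    have h1 := hUcard
    have h2 := le_trans hW1card hSmall
    have h3 := hW2card
    omega
  have hpow : q ^ 2 = q * q := sq q
  calc R.length ≤ 2 * (n - 1) + 2 * H * (q * q) + (q - 1) := hK
    _ ≤ 2 * n + 2 * (q * q * H) + q * q * H := by
        have h1 : 2 * (n - 1) ≤ 2 * n := by omega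
        have h2 : 2 * H * (q * q) = 2 * (q * q * H) := by ring
        omega
    _ ≤ 4 * (n + q ^ 2 * H) := by
        rw [hpow]
        have : 0 ≤ q * q * H := Nat.zero_le _
        nlinarith
end
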